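/- Let G be a connected graph on n ≥ 2 vertices with maximum degree Δ and degrees d₁ ≥ ... ≥ d_n. Then for each 1 ≤ i ≤ n, the signless Laplacian spectral radius satisfies ρ(Q(G)) ≤ (d₁ + 2d_i − 1 + √((2d_i − d₁ + 1)² + 8·Σ_{k=1}^{i−1}(d_k − d_i)))/2. -/

import Mathlib

set_option maxHeartbeats 1000000

open Matrix Finset Real

/-- Spectral radius: largest modulus of a complex eigenvalue (root of the
characteristic polynomial). -/
noncomputable def specRad {n : ℕ} (A : Matrix (Fin n) (Fin n) ℝ) : ℝ :=
  (((A.map (Complex.ofReal)).charpoly.roots).map (fun z => ‖z‖)).foldr max 0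

/-- Irreducibility of a nonnegative matrix. -/
def Irred {n : ℕ} (A : Matrix (Fin n) (Fin n) ℝ) : Prop :=
  ∀ i j : Fin n, ∃ k : ℕ, 0 < (A ^ k) i j

lemma foldr_max_le' {B : ℝ} (hB : 0 ≤ B) (s : Multiset ℝ) (h : ∀ x ∈ s, x ≤ B) :
    s.foldr max 0 ≤ B := by
  induction s using Multiset.induction_on with
  | empty => simpa using hB
  | cons a s ih =>
    rw [Multiset.foldr_cons]
    exact max_le (h a (Multiset.mem_cons_self a s))
      (ih fun x hx => h x (Multiset.mem_cons_of_mem hx))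

lemma exists_eigvec' {n : ℕ} (A : Matrix (Fin n) (Fin n) ℂ) (z : ℂ)
    (hz : z ∈ A.charpoly.roots) : ∃ x : Fin n → ℂ, x ≠ 0 ∧ ∀ u, (A *ᵥ x) u = z * x u := by
  have hroot : A.charpoly.IsRoot z := (Polynomial.mem_roots'.mp hz).2
  have hdet : (Matrix.scalar (Fin n) z - A).det = 0 := by
    rw [Polynomial.IsRoot, Matrix.charpoly, eval_det, matPolyEquiv_charmatrix] at hroot
    simpa using hroot
  obtain ⟨x, hx0, hx⟩ := (Matrix.exists_mulVec_eq_zero_iff).mpr hdet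
  refine ⟨x, hx0, fun u => ?_⟩
  have h := congrFun hx u
  rw [sub_mulVec] at h
  have hsc : ((Matrix.scalar (Fin n) z) *ᵥ x) u = z * x u := by
    rw [scalar_apply, mulVec_diagonal]
  have h' : ((Matrix.scalar (Fin n) z) *ᵥ x) u - (A *ᵥ x) u = 0 := h
  rw [hsc] at h'
  linear_combination -h'

/-- Core combinatorial lemma: any nonnegative nonzero vector `y` that is subinvariant
for the signless Laplacian (`r • y ≤ Q y` componentwise) certifies the degree-sequence
bound on `r`. -/
lemma core_lemma' {n : ℕ} (hn : 2 ≤ n) (G : SimpleGraph (Fin n)) [DecidableRel G.Adj]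
    (hord : ∀ i j : Fin n, i ≤ j → G.degree j ≤ G.degree i) (i : Fin n)
    (r : ℝ) (y : Fin n → ℝ) (hy0 : y ≠ 0) (hnn : ∀ v, 0 ≤ y v)
    (hsub : ∀ u, r * y u ≤ (G.degree u : ℝ) * y u + ∑ w ∈ G.neighborFinset u, y w) :
    r ≤ ((G.degree (⟨0, (by omega : 1 ≤ n)⟩ : Fin n) : ℝ) + 2 * (G.degree i : ℝ) - 1 +
          Real.sqrt ((2 * (G.degree i : ℝ) - (G.degree (⟨0, (by omega : 1 ≤ n)⟩ : Fin n) : ℝ) + 1) ^ 2 +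
            8 * ∑ k ∈ Finset.Iio i, ((G.degree k : ℝ) - (G.degree i : ℝ)))) / 2 := by
  set d1 : ℝ := (G.degree (⟨0, (by omega : 1 ≤ n)⟩ : Fin n) : ℝ) with hd1
  set di : ℝ := (G.degree i : ℝ) with hdi
  set S : ℝ := ∑ k ∈ Finset.Iio i, ((G.degree k : ℝ) - di) with hS
  have hSnn : 0 ≤ S := by
    apply Finset.sum_nonneg
    intro k hk
    have h : G.degree i ≤ G.degree k := hord k i (le_of_lt (Finset.mem_Iio.mp hk))
    have h' := (Nat.cast_le (α := ℝ)).mpr h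
    simp only [sub_nonneg]
    exact h'
  have hsq1 : 2 * di - d1 + 1 ≤ Real.sqrt ((2 * di - d1 + 1) ^ 2 + 8 * S) := by
    have h1 : Real.sqrt ((2 * di - d1 + 1) ^ 2) ≤ Real.sqrt ((2 * di - d1 + 1) ^ 2 + 8 * S) :=
      Real.sqrt_le_sqrt (by linarith)
    rw [Real.sqrt_sq_eq_abs] at h1
    exact le_trans (le_abs_self _) h1
  by_cases hcase : r ≤ 2 * di
  · linarith
  push_neg at hcase
  -- max vertex
  obtain ⟨u, -, hu⟩ :=
    Finset.exists_max_image (Finset.univ : Finset (Fin n)) y ⟨i, Finset.mem_univ i⟩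
  have hu' : ∀ v, y v ≤ y u := fun v => hu v (Finset.mem_univ v)
  set M : ℝ := y u with hM
  have hMpos : 0 < M := by
    rcases lt_or_ge 0 M with h | h
    · exact h
    · exfalso; apply hy0; funext v
      exact le_antisymm (le_trans (hu' v) h) (hnn v)
  set Y : ℝ := ∑ v, y v with hY
  have hdu1 : (G.degree u : ℝ) ≤ d1 := by
    have h := hord (⟨0, by omega⟩ : Fin n) u (by simp [Fin.le_def])
    rw [hd1]
    exact_mod_cast h
  -- lower bound on the total weight Y
  have hYlow : (r - (G.degree u : ℝ) + 1) * M ≤ Y := by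
    have h1 := hsub u
    have h2 : ∑ w ∈ G.neighborFinset u, y w ≤ ∑ w ∈ Finset.univ.erase u, y w := by
      apply Finset.sum_le_sum_of_subset_of_nonneg
      · intro v hv
        rw [Finset.mem_erase]
        have hadj : G.Adj u v := (SimpleGraph.mem_neighborFinset _ _ _).mp hv
        exact ⟨hadj.ne', Finset.mem_univ v⟩
      · intro v _ _; exact hnn v
    have h3 : y u + ∑ w ∈ Finset.univ.erase u, y w = Y :=
      Finset.add_sum_erase _ y (Finset.mem_univ u)
    nlinarith [h1, h2, h3]
  -- double counting the edge sum
  have hdouble : ∑ v, ∑ w ∈ G.neighborFinset v, y w = ∑ w, (G.degree w : ℝ) * y w := by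
    have hrow : ∀ v : Fin n, ∑ w ∈ G.neighborFinset v, y w
        = ∑ w, (G.adjMatrix ℝ) v w * y w := by
      intro v
      rw [SimpleGraph.neighborFinset_eq_filter, Finset.sum_filter]
      apply Finset.sum_congr rfl
      intro w _
      by_cases h : G.Adj v w <;> simp [h]
    calc ∑ v, ∑ w ∈ G.neighborFinset v, y w
        = ∑ v, ∑ w, (G.adjMatrix ℝ) v w * y w := by simp_rw [hrow]
      _ = ∑ w, ∑ v, (G.adjMatrix ℝ) v w * y w := Finset.sum_comm
      _ = ∑ w, (∑ v, (G.adjMatrix ℝ) w v) * y w := by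
          apply Finset.sum_congr rfl
          intro w _
          rw [Finset.sum_mul]
          apply Finset.sum_congr rfl
          intro v _
          congr 1
          simp [SimpleGraph.adjMatrix_apply, SimpleGraph.adj_comm]
      _ = ∑ w, (G.degree w : ℝ) * y w := by
          apply Finset.sum_congr rfl
          intro w _
          congr 1
          simp [SimpleGraph.adjMatrix_apply, SimpleGraph.neighborFinset_eq_filter,
            SimpleGraph.degree, Finset.sum_boole]
  -- bound on the weighted degree sum
  have hdeg : ∑ v, (G.degree v : ℝ) * y v ≤ di * Y + M * S := by
    have h1 : ∑ v, (G.degree v : ℝ) * y v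
        = di * Y + ∑ v, ((G.degree v : ℝ) - di) * y v := by
      rw [hY, Finset.mul_sum, ← Finset.sum_add_distrib]
      apply Finset.sum_congr rfl
      intro v _; ring
    have h2 : ∑ v, ((G.degree v : ℝ) - di) * y v
        ≤ ∑ v, (if v ∈ Finset.Iio i then ((G.degree v : ℝ) - di) * M else 0) := by
      apply Finset.sum_le_sum
      intro v _
      by_cases hv : v ∈ Finset.Iio i
      · simp only [hv, if_true]
        have hdv : di ≤ (G.degree v : ℝ) := by
          rw [hdi]
          exact_mod_cast hord v i (le_of_lt (Finset.mem_Iio.mp hv))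
        exact mul_le_mul_of_nonneg_left (hu' v) (by linarith)
      · simp only [hv, if_false]
        have hvi : i ≤ v := le_of_not_gt (fun h => hv (Finset.mem_Iio.mpr h))
        have hdv : (G.degree v : ℝ) ≤ di := by
          rw [hdi]
          exact_mod_cast hord i v hvi
        exact mul_nonpos_of_nonpos_of_nonneg (by linarith) (hnn v)
    have h3 : ∑ v, (if v ∈ Finset.Iio i then ((G.degree v : ℝ) - di) * M else 0) = S * M := by
      rw [Finset.sum_ite_mem, Finset.univ_inter, hS, Finset.sum_mul]
    nlinarith [h1, h2, h3]
  -- global inequality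
  have hglobal : r * Y ≤ 2 * di * Y + 2 * M * S := by
    have h1 : r * Y ≤ ∑ v, ((G.degree v : ℝ) * y v + ∑ w ∈ G.neighborFinset v, y w) := by
      rw [hY, Finset.mul_sum]
      exact Finset.sum_le_sum (fun v _ => hsub v)
    rw [Finset.sum_add_distrib, hdouble] at h1
    nlinarith [hdeg]
  -- key inequality
  have key : (r - 2 * di) * (r - d1 + 1) ≤ 2 * S := by
    have h1 : (r - 2 * di) * Y ≤ 2 * M * S := by nlinarith [hglobal]
    have h2 : (r - 2 * di) * ((r - d1 + 1) * M) ≤ (r - 2 * di) * Y := by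
      apply mul_le_mul_of_nonneg_left _ (by linarith)
      calc (r - d1 + 1) * M ≤ (r - (G.degree u : ℝ) + 1) * M :=
            mul_le_mul_of_nonneg_right (by linarith) hMpos.le
        _ ≤ Y := hYlow
    have h3 : (r - 2 * di) * (r - d1 + 1) * M ≤ 2 * S * M := by nlinarith [h1, h2]
    exact le_of_mul_le_mul_right h3 hMpos
  -- finish by completing the square
  have hsq : Real.sqrt ((2 * r - (d1 + 2 * di - 1)) ^ 2)
      ≤ Real.sqrt ((2 * di - d1 + 1) ^ 2 + 8 * S) := by
    apply Real.sqrt_le_sqrt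
    nlinarith [key]
  rw [Real.sqrt_sq_eq_abs] at hsq
  have habs := le_abs_self (2 * r - (d1 + 2 * di - 1))
  linarith

theorem stmt_10 {n : ℕ} (hn : 2 ≤ n) (G : SimpleGraph (Fin n)) [DecidableRel G.Adj]
    (hconn : G.Connected)
    (hord : ∀ i j : Fin n, i ≤ j → G.degree j ≤ G.degree i) :
    ∀ i : Fin n,
      specRad (Matrix.diagonal (fun i => (G.degree i : ℝ)) + G.adjMatrix ℝ) ≤
        ((G.degree (⟨0, by omega⟩ : Fin n) : ℝ) + 2 * (G.degree i : ℝ) - 1 +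
          Real.sqrt ((2 * (G.degree i : ℝ) - (G.degree (⟨0, by omega⟩ : Fin n) : ℝ) + 1) ^ 2 +
            8 * ∑ k ∈ Finset.Iio i, ((G.degree k : ℝ) - (G.degree i : ℝ)))) / 2 := by
  intro i
  set Q := Matrix.diagonal (fun v => (G.degree v : ℝ)) + G.adjMatrix ℝ with hQ
  set B := ((G.degree (⟨0, by omega⟩ : Fin n) : ℝ) + 2 * (G.degree i : ℝ) - 1 +
          Real.sqrt ((2 * (G.degree i : ℝ) - (G.degree (⟨0, by omega⟩ : Fin n) : ℝ) + 1) ^ 2 +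
            8 * ∑ k ∈ Finset.Iio i, ((G.degree k : ℝ) - (G.degree i : ℝ)))) / 2 with hB
  have hSnn : 0 ≤ ∑ k ∈ Finset.Iio i, ((G.degree k : ℝ) - (G.degree i : ℝ)) := by
    apply Finset.sum_nonneg
    intro k hk
    have h : G.degree i ≤ G.degree k := hord k i (le_of_lt (Finset.mem_Iio.mp hk))
    have h' := (Nat.cast_le (α := ℝ)).mpr h
    simp only [sub_nonneg]
    exact h'
  have hBnn : 0 ≤ B := by
    rw [hB]
    have h1 : 2 * (G.degree i : ℝ) - (G.degree (⟨0, by omega⟩ : Fin n) : ℝ) + 1 ≤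
        Real.sqrt ((2 * (G.degree i : ℝ) - (G.degree (⟨0, by omega⟩ : Fin n) : ℝ) + 1) ^ 2 +
          8 * ∑ k ∈ Finset.Iio i, ((G.degree k : ℝ) - (G.degree i : ℝ))) := by
      have h2 : Real.sqrt ((2 * (G.degree i : ℝ) -
          (G.degree (⟨0, by omega⟩ : Fin n) : ℝ) + 1) ^ 2) ≤
          Real.sqrt ((2 * (G.degree i : ℝ) - (G.degree (⟨0, by omega⟩ : Fin n) : ℝ) + 1) ^ 2 +
            8 * ∑ k ∈ Finset.Iio i, ((G.degree k : ℝ) - (G.degree i : ℝ))) :=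
        Real.sqrt_le_sqrt (by linarith)
      rw [Real.sqrt_sq_eq_abs] at h2
      exact le_trans (le_abs_self _) h2
    have h3 : (0 : ℝ) ≤ (G.degree i : ℝ) := Nat.cast_nonneg _
    linarith
  rw [specRad]
  apply foldr_max_le' hBnn
  intro t ht
  rw [Multiset.mem_map] at ht
  obtain ⟨z, hz, rfl⟩ := ht
  -- get an eigenvector for z
  obtain ⟨x, hx0, hx⟩ := exists_eigvec' (Q.map Complex.ofReal) z hz
  set y : Fin n → ℝ := fun v => ‖x v‖ with hy
  have hy0 : y ≠ 0 := by
    intro h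
    apply hx0
    funext v
    have hv := congrFun h v
    simpa [hy] using hv
  have hnn : ∀ v, 0 ≤ y v := fun v => norm_nonneg _
  have hQnn : ∀ a b, 0 ≤ Q a b := by
    intro a b
    rw [hQ]
    simp only [Matrix.add_apply, Matrix.diagonal_apply, SimpleGraph.adjMatrix_apply]
    positivity
  have hsub : ∀ u, ‖z‖ * y u ≤
      (G.degree u : ℝ) * y u + ∑ w ∈ G.neighborFinset u, y w := by
    intro u
    have h1 : ‖z‖ * y u = ‖(Q.map Complex.ofReal *ᵥ x) u‖ := by
      rw [hx u, norm_mul]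
    have h2 : (Q.map Complex.ofReal *ᵥ x) u = ∑ v, (Q u v : ℂ) * x v := by
      simp [Matrix.mulVec, dotProduct, Matrix.map_apply]
    have h3 : ‖∑ v, (Q u v : ℂ) * x v‖ ≤ ∑ v, Q u v * y v := by
      refine le_trans (norm_sum_le _ _) ?_
      apply le_of_eq
      apply Finset.sum_congr rfl
      intro v _
      rw [norm_mul, Complex.norm_real, Real.norm_of_nonneg (hQnn u v)]
    have h4 : ∑ v, Q u v * y v =
        (G.degree u : ℝ) * y u + ∑ w ∈ G.neighborFinset u, y w := by
      rw [hQ]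
      simp only [Matrix.add_apply, add_mul]
      rw [Finset.sum_add_distrib]
      congr 1
      · simp [Matrix.diagonal_apply, ite_mul]
      · rw [SimpleGraph.neighborFinset_eq_filter, Finset.sum_filter]
        apply Finset.sum_congr rfl
        intro w _
        by_cases h : G.Adj u w <;> simp [h]
    rw [h1, h2]
    exact le_trans h3 (le_of_eq h4)
  exact core_lemma' hn G hord i (‖z‖) y hy0 hnn hsub
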